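/- For any γr, γp, kp > 0 there exist k₁, k₂ ∈ ℝ such that the matrix [[-γr, -k₁, k₂], [kp, -γp, 0], [0, -1, 0]] is Hurwitz; i.e., the mean dynamics are stabilizable by PI control. -/

import Mathlib

open Matrix

/-- A real square matrix is Hurwitz if every eigenvalue (element of its complex
spectrum) has strictly negative real part. -/
def IsHurwitz {n : ℕ} (A : Matrix (Fin n) (Fin n) ℝ) : Prop :=
  ∀ z ∈ spectrum ℂ (A.map (Complex.ofReal)), z.re < 0

theorem stmt_5 (γr γp kp : ℝ) (hγr : 0 < γr) (hγp : 0 < γp) (hkp : 0 < kp) :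
    ∃ k₁ k₂ : ℝ, IsHurwitz !![-γr, -k₁, k₂; kp, -γp, 0; 0, -1, 0] := by
  set c : ℝ := (γr + γp) / 3 with hc
  have hc0 : 0 < c := by positivity
  have hkp' : (kp : ℂ) ≠ 0 := by exact_mod_cast hkp.ne'
  refine ⟨(3 * c ^ 2 - γr * γp) / kp, c ^ 3 / kp, ?_⟩
  intro z hz
  rw [spectrum.mem_iff, Matrix.isUnit_iff_isUnit_det, isUnit_iff_ne_zero, not_not] at hz
  have hdet : ((algebraMap ℂ (Matrix (Fin 3) (Fin 3) ℂ)) z -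
      (!![-γr, -((3 * c ^ 2 - γr * γp) / kp), c ^ 3 / kp; kp, -γp, 0; 0, -1, 0]).map
        (Complex.ofReal)).det = (z + (c : ℂ)) ^ 3 := by
    simp [Matrix.det_fin_three, Matrix.algebraMap_matrix_apply, Matrix.vecHead, Matrix.vecTail]
    field_simp
    ring_nf
    push_cast
    rw [hc]
    push_cast
    ring
  rw [hdet] at hz
  have hzc : z = -(c : ℂ) := by
    have := pow_eq_zero_iff (n := 3) (by norm_num) |>.mp hz
    linear_combination this
  rw [hzc]
  simpa using neg_neg_iff_pos.mpr hc0
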